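/- Let C_λ be the copula of the bivariate random vector X = −(V/2)(1/S₁, 1/S₂) where V has df H_λ, S₁ = U = 1 − S₂ with U uniform(0,1) independent of V, and λ ∈ [−√2/2, √2/2], λ ≠ 0. Then (1 − C_λ(F_λ(t), F_λ(t)))/(1 − F_λ(t)) = 2·∫_{1/2}^1 H_λ(|t|u) du / ∫_0^1 H_λ(|t|u) du for t ∈ (−1, 0), where F_λ is the common marginal df of −V/S₁ and −V/S₂. -/

import Mathlib

open MeasureTheory

noncomputable def Hfun (lam u : ℝ) : ℝ :=
  if u = 0 then 0 else u * (1 + lam * Real.sin (Real.log u))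

open MeasureTheory Set Filter Topology
open scoped ENNReal


lemma Hfun_measurable (lam : ℝ) : Measurable (Hfun lam) := by
  unfold Hfun
  apply Measurable.ite (measurableSet_singleton 0) measurable_const
  exact measurable_id.mul ((measurable_const.add
    (measurable_const.mul (Real.measurable_sin.comp Real.measurable_log))))

lemma sqrt2_half_lt_one : Real.sqrt 2 / 2 < 1 := by
  have : Real.sqrt 2 < 2 := by
    nlinarith [Real.sq_sqrt (by norm_num : (0:ℝ) ≤ 2), Real.sqrt_nonneg 2]
  linarith

lemma term_abs_le {lam : ℝ} (hlam : |lam| ≤ Real.sqrt 2 / 2) (y : ℝ) :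
    |lam * Real.sin y| ≤ Real.sqrt 2 / 2 := by
  rw [abs_mul]
  have h1 : |Real.sin y| ≤ 1 := abs_le.mpr ⟨Real.neg_one_le_sin y, Real.sin_le_one y⟩
  calc |lam| * |Real.sin y| ≤ (Real.sqrt 2 / 2) * 1 :=
        mul_le_mul hlam h1 (abs_nonneg _) (by positivity)
    _ = Real.sqrt 2 / 2 := by ring

lemma Hfun_nonneg {lam : ℝ} (hlam : |lam| ≤ Real.sqrt 2 / 2) {x : ℝ} (hx : 0 ≤ x) :
    0 ≤ Hfun lam x := by
  unfold Hfun
  split_ifs with h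
  · exact le_refl 0
  · have h1 := (abs_le.mp (term_abs_le hlam (Real.log x))).1
    have h2 := sqrt2_half_lt_one
    have hx' : 0 < x := lt_of_le_of_ne hx (Ne.symm h)
    nlinarith

lemma Hfun_le {lam : ℝ} (hlam : |lam| ≤ Real.sqrt 2 / 2) {x : ℝ} (hx0 : 0 < x) (hx1 : x ≤ 1) :
    Hfun lam x ≤ 1 - (1 - Real.sqrt 2 / 2) * (1 - x) := by
  have hne : x ≠ 0 := ne_of_gt hx0
  unfold Hfun
  rw [if_neg hne]
  -- |x * (lam * sin (log x))| ≤ x * (√2/2) * |log x| ≤ (√2/2) * (1 - x)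
  have h1 : |lam * Real.sin (Real.log x)| ≤ (Real.sqrt 2 / 2) * |Real.log x| := by
    rw [abs_mul]
    have hs : |Real.sin (Real.log x)| ≤ |Real.log x| := Real.abs_sin_le_abs
    exact mul_le_mul hlam hs (abs_nonneg _) (by positivity)
  have hlog : x * |Real.log x| ≤ 1 - x := by
    have hlx : Real.log x ≤ 0 := Real.log_nonpos (le_of_lt hx0) hx1
    rw [abs_of_nonpos hlx]
    have h2 : Real.log (1 / x) ≤ 1 / x - 1 := Real.log_le_sub_one_of_pos (by positivity)
    rw [Real.log_div one_ne_zero hne, Real.log_one] at h2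
    have h3 : -Real.log x ≤ 1 / x - 1 := by linarith
    calc x * -Real.log x ≤ x * (1 / x - 1) := by
          exact mul_le_mul_of_nonneg_left h3 (le_of_lt hx0)
      _ = 1 - x := by field_simp
  have h4 : x * (lam * Real.sin (Real.log x)) ≤ (Real.sqrt 2 / 2) * (1 - x) := by
    calc x * (lam * Real.sin (Real.log x)) ≤ x * |lam * Real.sin (Real.log x)| := by
          exact mul_le_mul_of_nonneg_left (le_abs_self _) (le_of_lt hx0)
      _ ≤ x * ((Real.sqrt 2 / 2) * |Real.log x|) := by
          exact mul_le_mul_of_nonneg_left h1 (le_of_lt hx0)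
      _ = (Real.sqrt 2 / 2) * (x * |Real.log x|) := by ring
      _ ≤ (Real.sqrt 2 / 2) * (1 - x) := by
          exact mul_le_mul_of_nonneg_left hlog (by positivity)
  nlinarith

lemma Hfun_le_one {lam : ℝ} (hlam : |lam| ≤ Real.sqrt 2 / 2) {x : ℝ} (hx0 : 0 ≤ x)
    (hx1 : x ≤ 1) : Hfun lam x ≤ 1 := by
  rcases eq_or_lt_of_le hx0 with h | h
  · simp [Hfun, ← h]
  · have := Hfun_le hlam h hx1
    have h2 := sqrt2_half_lt_one
    nlinarith

lemma Hfun_continuousAt (lam : ℝ) {x : ℝ} (hx : x ≠ 0) : ContinuousAt (Hfun lam) x := by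
  have hev : ∀ᶠ y in 𝓝 x, (fun y => y * (1 + lam * Real.sin (Real.log y))) y = Hfun lam y := by
    filter_upwards [eventually_ne_nhds hx] with y hy
    simp [Hfun, hy]
  apply ContinuousAt.congr _ hev
  exact continuousAt_id.mul ((continuousAt_const.add
    (continuousAt_const.mul ((Real.continuous_sin.continuousAt).comp (Real.continuousAt_log hx)))))

lemma measure_Iio_eq {lam : ℝ} (μ : Measure ℝ)
    (hIic : ∀ y ∈ Icc (0:ℝ) 1, μ (Iic y) = ENNReal.ofReal (Hfun lam y))
    {x : ℝ} (hx0 : 0 < x) (hx1 : x ≤ 1) : μ (Iio x) = ENNReal.ofReal (Hfun lam x) := by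
  set y : ℕ → ℝ := fun n => x - x / (n + 2) with hy
  have hdiv : ∀ n : ℕ, 0 < x / ((n:ℝ) + 2) := fun n => by positivity
  have hylt : ∀ n, y n < x := fun n => by
    have := hdiv n; simp only [hy]; linarith
  have hypos : ∀ n : ℕ, 0 < y n := by
    intro n
    have h1 : x / ((n:ℝ) + 2) < x := by
      rw [div_lt_iff₀ (by positivity)]
      nlinarith [Nat.cast_nonneg (α := ℝ) n]
    simp only [hy]; linarith
  have hymem : ∀ n, y n ∈ Icc (0:ℝ) 1 := fun n => ⟨(hypos n).le, le_trans (hylt n).le hx1⟩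
  have hymono : Monotone y := by
    intro a b hab
    simp only [hy]
    have h2 : x / ((b:ℝ) + 2) ≤ x / ((a:ℝ) + 2) := by
      apply div_le_div_of_nonneg_left hx0.le (by positivity)
      have : (a:ℝ) ≤ (b:ℝ) := Nat.cast_le.mpr hab
      linarith
    linarith
  have hytend : Tendsto y atTop (𝓝 x) := by
    have h0 : Tendsto (fun n : ℕ => x / ((n:ℝ) + 2)) atTop (𝓝 0) := by
      apply Tendsto.div_atTop tendsto_const_nhds
      exact tendsto_atTop_add_const_right _ 2 tendsto_natCast_atTop_atTop
    have := tendsto_const_nhds (x := x) (f := atTop (α := ℕ)) |>.sub h0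
    simpa using this
  have hUnion : Iio x = ⋃ n, Iic (y n) := by
    ext z
    simp only [mem_Iio, mem_iUnion, mem_Iic]
    constructor
    · intro hz
      obtain ⟨n, hn⟩ := (hytend.eventually (eventually_gt_nhds hz)).exists
      exact ⟨n, hn.le⟩
    · rintro ⟨n, hn⟩; exact lt_of_le_of_lt hn (hylt n)
  have hdir : Directed (· ⊆ ·) (fun n => Iic (y n)) :=
    Monotone.directed_le fun a b h => Iic_subset_Iic.mpr (hymono h)
  rw [hUnion, hdir.measure_iUnion]
  rw [iSup_congr (fun n => hIic _ (hymem n))]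
  have hmono2 : Monotone (fun n => ENNReal.ofReal (Hfun lam (y n))) := by
    intro a b h
    simp only []
    rw [← hIic _ (hymem a), ← hIic _ (hymem b)]
    exact measure_mono (Iic_subset_Iic.mpr (hymono h))
  refine tendsto_nhds_unique (tendsto_atTop_iSup hmono2) ?_
  exact (ENNReal.continuous_ofReal.continuousAt.tendsto).comp
    (((Hfun_continuousAt lam hx0.ne').tendsto).comp hytend)

theorem stmt18 {Ω : Type*} [MeasurableSpace Ω] (P : Measure Ω) [IsProbabilityMeasure P]
    (lam : ℝ) (hlam : |lam| ≤ Real.sqrt 2 / 2) (hlam0 : lam ≠ 0)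
    (V U : Ω → ℝ) (hV : Measurable V) (hU : Measurable U)
    (hindep : ProbabilityTheory.IndepFun V U P)
    (hVrange : ∀ ω, V ω ∈ Set.Icc (0:ℝ) 1)
    (hVlaw : ∀ u ∈ Set.Icc (0:ℝ) 1, P {ω | V ω ≤ u} = ENNReal.ofReal (Hfun lam u))
    (hUlaw : P.map U = volume.restrict (Set.Ioo 0 1))
    (C : ℝ → ℝ → ℝ)
    (hC : ∀ s t : ℝ,
      P {ω | -(V ω) / U ω ≤ s ∧ -(V ω) / (1 - U ω) ≤ t}
        = ENNReal.ofReal (C (P {ω | -(V ω) / U ω ≤ s}).toReal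
            (P {ω | -(V ω) / (1 - U ω) ≤ t}).toReal))
    (t : ℝ) (ht1 : -1 < t) (ht2 : t < 0) :
    (1 - C (P {ω | -(V ω) / U ω ≤ t}).toReal (P {ω | -(V ω) / U ω ≤ t}).toReal) /
        (1 - (P {ω | -(V ω) / U ω ≤ t}).toReal)
      = 2 * (∫ u in (1/2 : ℝ)..1, Hfun lam (|t| * u)) /
          ∫ u in (0 : ℝ)..1, Hfun lam (|t| * u) := by
  rw [show |t| = -t from abs_of_neg ht2]
  set c : ℝ := -t with hcdef
  have hc0 : (0:ℝ) < c := by rw [hcdef]; linarith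
  have hc1 : c < 1 := by rw [hcdef]; linarith
  set K : ℝ := ∫ u in (1/2:ℝ)..1, Hfun lam (c * u) with hKdef
  set I : ℝ := ∫ u in (0:ℝ)..1, Hfun lam (c * u) with hIdef
  haveI hPV : IsProbabilityMeasure (P.map V) := Measure.isProbabilityMeasure_map hV.aemeasurable
  haveI hPU : IsProbabilityMeasure (P.map U) := Measure.isProbabilityMeasure_map hU.aemeasurable
  have hmap : P.map (fun ω => (U ω, V ω)) = (P.map U).prod (P.map V) :=
    (ProbabilityTheory.indepFun_iff_map_prod_eq_prod_map_map hU.aemeasurable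
      hV.aemeasurable).mp hindep.symm
  have hIic : ∀ y ∈ Icc (0:ℝ) 1, (P.map V) (Iic y) = ENNReal.ofReal (Hfun lam y) := by
    intro y hy
    rw [Measure.map_apply hV measurableSet_Iic]
    exact hVlaw y hy
  -- key computation
  have hkey : ∀ g : ℝ → ℝ, Measurable g → (∀ u ∈ Ioo (0:ℝ) 1, 0 < g u ∧ g u ≤ 1) →
      P {ω | g (U ω) ≤ V ω} = 1 - ENNReal.ofReal (∫ u in Ioo (0:ℝ) 1, Hfun lam (g u)) := by
    intro g hg hgm
    have hset : MeasurableSet {p : ℝ × ℝ | g p.1 ≤ p.2} :=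
      measurableSet_le (hg.comp measurable_fst) measurable_snd
    have h1 : P {ω | g (U ω) ≤ V ω} = ((P.map U).prod (P.map V)) {p : ℝ × ℝ | g p.1 ≤ p.2} := by
      rw [← hmap, Measure.map_apply (hU.prodMk hV) hset]
      rfl
    rw [h1, Measure.prod_apply hset, hUlaw]
    have h2 : ∫⁻ u in Ioo (0:ℝ) 1, (P.map V) (Prod.mk u ⁻¹' {p : ℝ × ℝ | g p.1 ≤ p.2})
        = ∫⁻ u in Ioo (0:ℝ) 1, ((1:ℝ≥0∞) - ENNReal.ofReal (Hfun lam (g u))) := by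
      apply setLIntegral_congr_fun measurableSet_Ioo
      intro u hu
      have hpre : Prod.mk u ⁻¹' {p : ℝ × ℝ | g p.1 ≤ p.2} = Ici (g u) := rfl
      beta_reduce
      rw [hpre, ← compl_Iio, measure_compl measurableSet_Iio (measure_ne_top _ _),
        measure_Iio_eq (P.map V) hIic (hgm u hu).1 (hgm u hu).2, measure_univ]
    rw [h2]
    have hfm : Measurable fun u => ENNReal.ofReal (Hfun lam (g u)) :=
      ENNReal.measurable_ofReal.comp ((Hfun_measurable lam).comp hg)
    have hb : ∀ᵐ u ∂(volume.restrict (Ioo (0:ℝ) 1)),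
        ENNReal.ofReal (Hfun lam (g u)) ≤ (1 : ℝ≥0∞) := by
      rw [ae_restrict_iff' measurableSet_Ioo]
      apply ae_of_all
      intro u hu
      exact ENNReal.ofReal_le_one.mpr (Hfun_le_one hlam (hgm u hu).1.le (hgm u hu).2)
    have hfin : ∫⁻ u in Ioo (0:ℝ) 1, ENNReal.ofReal (Hfun lam (g u)) ≠ ⊤ := by
      apply ne_of_lt
      calc ∫⁻ u in Ioo (0:ℝ) 1, ENNReal.ofReal (Hfun lam (g u))
          ≤ ∫⁻ _ in Ioo (0:ℝ) 1, (1:ℝ≥0∞) := lintegral_mono_ae hb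
        _ = volume (Ioo (0:ℝ) 1) := setLIntegral_one _
        _ < ⊤ := by simp [Real.volume_Ioo]
    rw [lintegral_sub hfm hfin hb]
    congr 1
    · rw [setLIntegral_one, Real.volume_Ioo]
      norm_num
    · rw [← MeasureTheory.ofReal_integral_eq_lintegral_ofReal]
      · constructor
        · exact ((Hfun_measurable lam).comp hg).aestronglyMeasurable
        · apply HasFiniteIntegral.of_bounded (C := 1)
          rw [ae_restrict_iff' measurableSet_Ioo]
          apply ae_of_all
          intro u hu
          rw [Real.norm_eq_abs, abs_of_nonneg (Hfun_nonneg hlam (hgm u hu).1.le)]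
          exact Hfun_le_one hlam (hgm u hu).1.le (hgm u hu).2
      · filter_upwards [ae_restrict_mem measurableSet_Ioo] with u hu
        exact Hfun_nonneg hlam (hgm u hu).1.le
  -- U is a.s. in (0,1)
  have hUae : ∀ᵐ ω ∂P, U ω ∈ Ioo (0:ℝ) 1 := by
    have h0 : P (U ⁻¹' (Ioo (0:ℝ) 1)ᶜ) = 0 := by
      rw [← Measure.map_apply hU measurableSet_Ioo.compl, hUlaw,
        Measure.restrict_apply measurableSet_Ioo.compl]
      simp
    rw [ae_iff]
    exact h0
  -- event equivalences
  have hE1 : {ω | -(V ω) / U ω ≤ t} =ᵐ[P] {ω | c * U ω ≤ V ω} := by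
    rw [Filter.eventuallyEq_set]
    filter_upwards [hUae] with ω hω
    rw [div_le_iff₀ hω.1, hcdef]
    constructor <;> intro h <;> nlinarith
  have hE2 : {ω | -(V ω) / (1 - U ω) ≤ t} =ᵐ[P] {ω | c * (1 - U ω) ≤ V ω} := by
    rw [Filter.eventuallyEq_set]
    filter_upwards [hUae] with ω hω
    have h1 : 0 < 1 - U ω := by linarith [hω.2]
    rw [div_le_iff₀ h1, hcdef]
    constructor <;> intro h <;> nlinarith
  have hE12 : {ω | -(V ω) / U ω ≤ t ∧ -(V ω) / (1 - U ω) ≤ t}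
      =ᵐ[P] {ω | c * max (U ω) (1 - U ω) ≤ V ω} := by
    rw [Filter.eventuallyEq_set]
    filter_upwards [hUae] with ω hω
    have h1 : 0 < 1 - U ω := by linarith [hω.2]
    rw [div_le_iff₀ hω.1, div_le_iff₀ h1, hcdef]
    rcases le_total (U ω) (1 - U ω) with h | h
    · rw [max_eq_right h]
      constructor
      · rintro ⟨ha, hb⟩
        nlinarith
      · intro hab
        constructor <;> nlinarith [mul_le_mul_of_nonpos_left h (le_of_lt ht2)]
    · rw [max_eq_left h]
      constructor
      · rintro ⟨ha, hb⟩
        nlinarith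
      · intro hab
        constructor <;> nlinarith [mul_le_mul_of_nonpos_left h (le_of_lt ht2)]
  -- integrability
  have hbdd : ∀ g : ℝ → ℝ, Measurable g → (∀ u ∈ Icc (0:ℝ) 1, 0 ≤ g u ∧ g u ≤ 1) →
      IntegrableOn (fun u => Hfun lam (g u)) (Icc (0:ℝ) 1) volume := by
    intro g hg hgm
    constructor
    · exact ((Hfun_measurable lam).comp hg).aestronglyMeasurable
    · apply HasFiniteIntegral.of_bounded (C := 1)
      rw [ae_restrict_iff' measurableSet_Icc]
      apply ae_of_all
      intro u hu
      rw [Real.norm_eq_abs, abs_of_nonneg (Hfun_nonneg hlam (hgm u hu).1)]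
      exact Hfun_le_one hlam (hgm u hu).1 (hgm u hu).2
  have hg1 : Measurable fun u : ℝ => c * u := measurable_id.const_mul c
  have hg1m : ∀ u ∈ Ioo (0:ℝ) 1, 0 < c * u ∧ c * u ≤ 1 := by
    intro u hu
    exact ⟨mul_pos hc0 hu.1, by nlinarith [hu.1, hu.2]⟩
  have hg2 : Measurable fun u : ℝ => c * (1 - u) :=
    (measurable_const.sub measurable_id).const_mul c
  have hg2m : ∀ u ∈ Ioo (0:ℝ) 1, 0 < c * (1 - u) ∧ c * (1 - u) ≤ 1 := by
    intro u hu
    exact ⟨mul_pos hc0 (by linarith [hu.2]), by nlinarith [hu.1, hu.2]⟩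
  have hg3 : Measurable fun u : ℝ => c * max u (1 - u) :=
    (measurable_id.max (measurable_const.sub measurable_id)).const_mul c
  have hg3m : ∀ u ∈ Ioo (0:ℝ) 1, 0 < c * max u (1 - u) ∧ c * max u (1 - u) ≤ 1 := by
    intro u hu
    constructor
    · exact mul_pos hc0 (lt_max_of_lt_left hu.1)
    · have h1 : max u (1 - u) ≤ 1 := max_le hu.2.le (by linarith [hu.1])
      nlinarith
  have hfICC : IntegrableOn (fun u => Hfun lam (c * u)) (Icc (0:ℝ) 1) volume := by
    apply hbdd _ hg1
    intro u hu
    exact ⟨mul_nonneg hc0.le hu.1, by nlinarith [hu.1, hu.2]⟩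
  have hFICC : IntegrableOn (fun u => Hfun lam (c * max u (1 - u))) (Icc (0:ℝ) 1) volume := by
    apply hbdd _ hg3
    intro u hu
    constructor
    · exact mul_nonneg hc0.le (le_max_of_le_left hu.1)
    · have h1 : max u (1 - u) ≤ 1 := max_le hu.2 (by linarith [hu.1])
      nlinarith
  -- conversion Ioo integral → interval integral
  have hIoo_eq : ∀ h : ℝ → ℝ, ∫ u in Ioo (0:ℝ) 1, h u = ∫ u in (0:ℝ)..1, h u := by
    intro h
    rw [intervalIntegral.integral_of_le (by norm_num : (0:ℝ) ≤ 1),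
      MeasureTheory.integral_Ioc_eq_integral_Ioo]
  -- P of the three events
  have hP1 : P {ω | -(V ω) / U ω ≤ t} = 1 - ENNReal.ofReal I := by
    rw [measure_congr hE1, hkey _ hg1 hg1m, hIoo_eq]
  have hsub : (∫ u in (0:ℝ)..1, Hfun lam (c * (1 - u))) = I := by
    rw [hIdef]
    have h := intervalIntegral.integral_comp_sub_left (a := (0:ℝ)) (b := 1)
      (fun u => Hfun lam (c * u)) 1
    simpa using h
  have hP2 : P {ω | -(V ω) / (1 - U ω) ≤ t} = 1 - ENNReal.ofReal I := by
    rw [measure_congr hE2, hkey _ hg2 hg2m, hIoo_eq, hsub]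
  have hii : ∀ a b : ℝ, 0 ≤ a → b ≤ 1 → a ≤ b →
      IntervalIntegrable (fun u => Hfun lam (c * max u (1 - u))) volume a b := by
    intro a b ha hb hab
    apply IntegrableOn.intervalIntegrable
    rw [uIcc_of_le hab]
    exact hFICC.mono_set (Icc_subset_Icc ha hb)
  have hJ : (∫ u in (0:ℝ)..1, Hfun lam (c * max u (1 - u))) = 2 * K := by
    have hsplit := (intervalIntegral.integral_add_adjacent_intervals
      (hii 0 (1/2) le_rfl (by norm_num) (by norm_num))
      (hii (1/2) 1 (by norm_num) le_rfl (by norm_num))).symm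
    rw [hsplit]
    have h1 : (∫ u in (0:ℝ)..(1/2:ℝ), Hfun lam (c * max u (1 - u)))
        = ∫ u in (0:ℝ)..(1/2:ℝ), Hfun lam (c * (1 - u)) := by
      apply intervalIntegral.integral_congr
      intro u hu
      rw [uIcc_of_le (by norm_num : (0:ℝ) ≤ 1/2)] at hu
      obtain ⟨h1u, h2u⟩ := hu
      show Hfun lam (c * max u (1 - u)) = Hfun lam (c * (1 - u))
      rw [max_eq_right (by linarith)]
    have h1' : (∫ u in (0:ℝ)..(1/2:ℝ), Hfun lam (c * (1 - u)))
        = ∫ u in (1/2:ℝ)..1, Hfun lam (c * u) := by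
      have h := intervalIntegral.integral_comp_sub_left (a := (0:ℝ)) (b := 1/2)
        (fun u => Hfun lam (c * u)) 1
      norm_num at h
      exact h
    have h2 : (∫ u in (1/2:ℝ)..1, Hfun lam (c * max u (1 - u))) = K := by
      rw [hKdef]
      apply intervalIntegral.integral_congr
      intro u hu
      rw [uIcc_of_le (by norm_num : (1/2:ℝ) ≤ 1)] at hu
      obtain ⟨h1u, h2u⟩ := hu
      show Hfun lam (c * max u (1 - u)) = Hfun lam (c * u)
      rw [max_eq_left (by linarith)]
    rw [h1, h1', h2, hKdef]
    ring
  have hP12 : P {ω | -(V ω) / U ω ≤ t ∧ -(V ω) / (1 - U ω) ≤ t}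
      = 1 - ENNReal.ofReal (2 * K) := by
    rw [measure_congr hE12, hkey _ hg3 hg3m, hIoo_eq, hJ]
  -- bounds on I and K
  have hInn : 0 ≤ I := by
    rw [hIdef]
    apply intervalIntegral.integral_nonneg (by norm_num : (0:ℝ) ≤ 1)
    intro u hu
    exact Hfun_nonneg hlam (mul_nonneg hc0.le hu.1)
  have hIle : I ≤ 1 := by
    rw [hIdef]
    calc (∫ u in (0:ℝ)..1, Hfun lam (c * u)) ≤ ∫ _ in (0:ℝ)..1, (1:ℝ) := by
          apply intervalIntegral.integral_mono_on (by norm_num : (0:ℝ) ≤ 1)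
          · apply IntegrableOn.intervalIntegrable
            rw [uIcc_of_le (by norm_num : (0:ℝ) ≤ 1)]
            exact hfICC
          · exact intervalIntegrable_const
          · intro u hu
            exact Hfun_le_one hlam (mul_nonneg hc0.le hu.1) (by nlinarith [hu.1, hu.2])
      _ = 1 := by simp
  have hKnn : 0 ≤ K := by
    rw [hKdef]
    apply intervalIntegral.integral_nonneg (by norm_num : (1/2:ℝ) ≤ 1)
    intro u hu
    exact Hfun_nonneg hlam (mul_nonneg hc0.le (by linarith [hu.1]))
  have hJlt : 2 * K < 1 := by
    have hkpos : 0 < 1 - Real.sqrt 2 / 2 := by linarith [sqrt2_half_lt_one]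
    have hKle : K ≤ (1/2) * (1 - (1 - Real.sqrt 2 / 2) * (1 - c)) := by
      rw [hKdef]
      calc (∫ u in (1/2:ℝ)..1, Hfun lam (c * u))
          ≤ ∫ _ in (1/2:ℝ)..1, (1 - (1 - Real.sqrt 2 / 2) * (1 - c)) := by
            apply intervalIntegral.integral_mono_on (by norm_num : (1/2:ℝ) ≤ 1)
            · apply IntegrableOn.intervalIntegrable
              rw [uIcc_of_le (by norm_num : (1/2:ℝ) ≤ 1)]
              exact hfICC.mono_set (Icc_subset_Icc (by norm_num) le_rfl)
            · exact intervalIntegrable_const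
            · intro u hu
              obtain ⟨h1u, h2u⟩ := hu
              have hcu0 : 0 < c * u := mul_pos hc0 (by linarith)
              have hcu1 : c * u ≤ 1 := by nlinarith
              calc Hfun lam (c * u) ≤ 1 - (1 - Real.sqrt 2 / 2) * (1 - c * u) :=
                    Hfun_le hlam hcu0 hcu1
                _ ≤ 1 - (1 - Real.sqrt 2 / 2) * (1 - c) := by
                    nlinarith [mul_le_mul_of_nonneg_left (mul_le_mul_of_nonneg_left h2u hc0.le) hkpos.le]
        _ = (1/2) * (1 - (1 - Real.sqrt 2 / 2) * (1 - c)) := by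
            rw [intervalIntegral.integral_const, smul_eq_mul]
            ring
    nlinarith
  -- extract real equalities
  have hF : (P {ω | -(V ω) / U ω ≤ t}).toReal = 1 - I := by
    rw [hP1, ← ENNReal.ofReal_one, ← ENNReal.ofReal_sub 1 hInn,
      ENNReal.toReal_ofReal (by linarith)]
  have hCeq := hC t t
  rw [hP2, ← hP1, hP12] at hCeq
  have hCF : C (P {ω | -(V ω) / U ω ≤ t}).toReal (P {ω | -(V ω) / U ω ≤ t}).toReal
      = 1 - 2 * K := by
    rw [← ENNReal.ofReal_one, ← ENNReal.ofReal_sub 1 (by linarith : (0:ℝ) ≤ 2 * K)] at hCeq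
    rcases le_or_gt (C (P {ω | -(V ω) / U ω ≤ t}).toReal
        (P {ω | -(V ω) / U ω ≤ t}).toReal) 0 with h | h
    · rw [ENNReal.ofReal_of_nonpos h] at hCeq
      have : (0:ℝ≥0∞) < ENNReal.ofReal (1 - 2 * K) := ENNReal.ofReal_pos.mpr (by linarith)
      rw [hCeq] at this
      simp at this
    · exact (ENNReal.ofReal_eq_ofReal_iff h.le (by linarith)).mp hCeq.symm
  rw [hCF, hF]
  rw [show (1:ℝ) - (1 - 2*K) = 2*K by ring, show (1:ℝ) - (1 - I) = I by ring]
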